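/- If v = (v₁, v₂) ∈ V_K satisfies the twelve conditions: ∫₀ᵃ v₂(x,0) dx = 0, ∫₀ᵃ v₂(x,b) dx = 0, ∫₀ᵇ v₁(a,y) dy = 0, ∫₀ᵇ v₁(0,y) dy = 0 (edge integrals of the normal component); ∫₀ᵃ v₂(x,0)·(2x−a)/a dx = 0, ∫₀ᵃ v₂(x,b)·(2x−a)/a dx = 0, ∫₀ᵇ v₁(a,y)·(2y−b)/b dy = 0, ∫₀ᵇ v₁(0,y)·(2y−b)/b dy = 0 (first moments of the normal component); and ∫₀ᵃ v₁(x,0) dx = 0, ∫₀ᵃ v₁(x,b) dx = 0, ∫₀ᵇ v₂(a,y) dy = 0, ∫₀ᵇ v₂(0,y) dy = 0 (edge integrals of the tangential component), then v = 0. -/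

import Mathlib

open MvPolynomial

/-- Membership in the vector shape function space
`V_K = [P₁]² ⊕ span{curl x³, curl x²y, curl xy², curl y³, curl x⁴, curl y⁴}`,
where `curl φ = (∂φ/∂y, −∂φ/∂x)`. -/
def memVK (v : MvPolynomial (Fin 2) ℝ × MvPolynomial (Fin 2) ℝ) : Prop :=
  ∃ (p q φ : MvPolynomial (Fin 2) ℝ) (c1 c2 c3 c4 c5 c6 : ℝ),
    p.totalDegree ≤ 1 ∧ q.totalDegree ≤ 1 ∧
    φ = C c1 * X 0 ^ 3 + C c2 * X 0 ^ 2 * X 1 + C c3 * X 0 * X 1 ^ 2 +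
        C c4 * X 1 ^ 3 + C c5 * X 0 ^ 4 + C c6 * X 1 ^ 4 ∧
    v.1 = p + pderiv 1 φ ∧ v.2 = q - pderiv 0 φ

lemma deg1 (p : MvPolynomial (Fin 2) ℝ) (h : p.totalDegree ≤ 1) :
    p = C (coeff 0 p) + C (coeff (Finsupp.single 0 1) p) * X 0 +
        C (coeff (Finsupp.single 1 1) p) * X 1 := by
  apply MvPolynomial.ext
  intro m
  rw [coeff_add, coeff_add, coeff_C, coeff_C_mul, coeff_C_mul, coeff_X', coeff_X']
  have key : ∀ n : Fin 2 →₀ ℕ, (m = n ↔ (m 0 = n 0 ∧ m 1 = n 1)) := by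
    intro n
    constructor
    · intro hh; subst hh; exact ⟨rfl, rfl⟩
    · rintro ⟨u, w⟩; ext i; revert i; rw [Fin.forall_fin_two]; exact ⟨u, w⟩
  by_cases h0 : m = 0
  · subst h0; simp [eq_comm (a := (0 : Fin 2 →₀ ℕ)), Finsupp.single_eq_zero]
  by_cases h1 : m = Finsupp.single 0 1
  · rw [if_neg (fun hh => h0 hh.symm), if_pos h1.symm,
      if_neg (fun hh : Finsupp.single 1 1 = m => by
        rw [key] at h1; simp [← hh, Finsupp.single_apply] at h1), h1]
    ring
  by_cases h2 : m = Finsupp.single 1 1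
  · rw [if_neg (fun hh => h0 hh.symm), if_pos h2.symm,
      if_neg (fun hh : Finsupp.single 0 1 = m => by
        rw [key] at h2; simp [← hh, Finsupp.single_apply] at h2), h2]
    ring
  · have hsum : 2 ≤ ∑ i ∈ m.support, m i := by
      rw [show ∑ i ∈ m.support, m i = ∑ i : Fin 2, m i from
        Finset.sum_subset (Finset.subset_univ _) (by simp), Fin.sum_univ_two]
      rw [key] at h0 h1 h2
      simp [Finsupp.single_apply] at h0 h1 h2
      omega
    have hz : coeff m p = 0 := coeff_eq_zero_of_totalDegree_lt (lt_of_le_of_lt h hsum)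
    rw [hz, if_neg (fun hh => h0 hh.symm), if_neg (fun hh => h1 hh.symm),
      if_neg (fun hh => h2 hh.symm)]
    ring

lemma int_quartic (k0 k1 k2 k3 k4 t : ℝ) :
    (∫ x in (0:ℝ)..t, (k0 + k1*x + k2*x^2 + k3*x^3 + k4*x^4)) =
      k0*t + k1*t^2/2 + k2*t^3/3 + k3*t^4/4 + k4*t^5/5 := by
  have h : ∀ x ∈ Set.uIcc (0:ℝ) t, HasDerivAt
      (fun x : ℝ => k0*x + k1*x^2/2 + k2*x^3/3 + k3*x^4/4 + k4*x^5/5)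
      (k0 + k1*x + k2*x^2 + k3*x^3 + k4*x^4) x := by
    intro x _
    have h1 : HasDerivAt (fun x : ℝ => k0*x) k0 x := by
      simpa using (hasDerivAt_id x).const_mul k0
    have h2 : HasDerivAt (fun x : ℝ => k1*x^2/2) (k1*x) x := by
      have := ((hasDerivAt_pow 2 x).const_mul k1).div_const 2
      refine this.congr_deriv ?_; push_cast; ring
    have h3 : HasDerivAt (fun x : ℝ => k2*x^3/3) (k2*x^2) x := by
      have := ((hasDerivAt_pow 3 x).const_mul k2).div_const 3
      refine this.congr_deriv ?_; push_cast; ring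
    have h4 : HasDerivAt (fun x : ℝ => k3*x^4/4) (k3*x^3) x := by
      have := ((hasDerivAt_pow 4 x).const_mul k3).div_const 4
      refine this.congr_deriv ?_; push_cast; ring
    have h5 : HasDerivAt (fun x : ℝ => k4*x^5/5) (k4*x^4) x := by
      have := ((hasDerivAt_pow 5 x).const_mul k4).div_const 5
      refine this.congr_deriv ?_; push_cast; ring
    exact (((h1.add h2).add h3).add h4).add h5
  rw [intervalIntegral.integral_eq_sub_of_hasDerivAt h
    (Continuous.intervalIntegrable (by continuity) _ _)]
  ring

lemma int_eq (f : ℝ → ℝ) (k0 k1 k2 k3 k4 t : ℝ)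
    (hf : ∀ x, f x = k0 + k1*x + k2*x^2 + k3*x^3 + k4*x^4)
    (h : (∫ x in (0:ℝ)..t, f x) = 0) :
    k0*t + k1*t^2/2 + k2*t^3/3 + k3*t^4/4 + k4*t^5/5 = 0 := by
  exact (int_quartic k0 k1 k2 k3 k4 t).symm.trans
    ((intervalIntegral.integral_congr fun x _ => (hf x).symm).trans h)

/-- unisolvency of the 12 degrees of freedom
(edge integrals and first moments of the normal component,
edge integrals of the tangential component) for the Stokes element
on `K = [0,a] × [0,b]`. -/
theorem stmt1 (a b : ℝ) (ha : 0 < a) (hb : 0 < b)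
    (v : MvPolynomial (Fin 2) ℝ × MvPolynomial (Fin 2) ℝ) (hv : memVK v)
    (hn1 : (∫ x in (0:ℝ)..a, eval ![x, 0] v.2) = 0)
    (hn3 : (∫ x in (0:ℝ)..a, eval ![x, b] v.2) = 0)
    (hn2 : (∫ y in (0:ℝ)..b, eval ![a, y] v.1) = 0)
    (hn4 : (∫ y in (0:ℝ)..b, eval ![(0:ℝ), y] v.1) = 0)
    (hm1 : (∫ x in (0:ℝ)..a, eval ![x, 0] v.2 * ((2 * x - a) / a)) = 0)
    (hm3 : (∫ x in (0:ℝ)..a, eval ![x, b] v.2 * ((2 * x - a) / a)) = 0)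
    (hm2 : (∫ y in (0:ℝ)..b, eval ![a, y] v.1 * ((2 * y - b) / b)) = 0)
    (hm4 : (∫ y in (0:ℝ)..b, eval ![(0:ℝ), y] v.1 * ((2 * y - b) / b)) = 0)
    (ht1 : (∫ x in (0:ℝ)..a, eval ![x, 0] v.1) = 0)
    (ht3 : (∫ x in (0:ℝ)..a, eval ![x, b] v.1) = 0)
    (ht2 : (∫ y in (0:ℝ)..b, eval ![a, y] v.2) = 0)
    (ht4 : (∫ y in (0:ℝ)..b, eval ![(0:ℝ), y] v.2) = 0) :
    v = 0 := by
  obtain ⟨p, q, φ, c1, c2, c3, c4, c5, c6, hpd, hqd, hφ, hv1, hv2⟩ := hv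
  obtain ⟨p0, p1, p2, hP⟩ : ∃ p0 p1 p2, p = C p0 + C p1 * X 0 + C p2 * X 1 :=
    ⟨_, _, _, deg1 p hpd⟩
  obtain ⟨q0, q1, q2, hQ⟩ : ∃ q0 q1 q2, q = C q0 + C q1 * X 0 + C q2 * X 1 :=
    ⟨_, _, _, deg1 q hqd⟩
  have hE1 : ∀ x y : ℝ, eval ![x,y] v.1 =
      p0 + p1*x + p2*y + c2*x^2 + 2*c3*x*y + 3*c4*y^2 + 4*c6*y^3 := by
    intro x y
    rw [hv1, hP, hφ]
    simp [pderiv_mul, pderiv_pow, pderiv_X, Pi.single_apply]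
    ring
  have hE2 : ∀ x y : ℝ, eval ![x,y] v.2 =
      q0 + q1*x + q2*y - (3*c1*x^2 + 2*c2*x*y + c3*y^2 + 4*c5*x^3) := by
    intro x y
    rw [hv2, hQ, hφ]
    simp [pderiv_mul, pderiv_pow, pderiv_X, Pi.single_apply]
    ring
  -- strip the /a, /b from the moment hypotheses
  have hm1' : (∫ x in (0:ℝ)..a, eval ![x, 0] v.2 * (2*x - a)) = 0 := by
    simp only [← mul_div_assoc] at hm1
    rw [intervalIntegral.integral_div] at hm1
    exact (div_eq_zero_iff.mp hm1).resolve_right ha.ne'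
  have hm3' : (∫ x in (0:ℝ)..a, eval ![x, b] v.2 * (2*x - a)) = 0 := by
    simp only [← mul_div_assoc] at hm3
    rw [intervalIntegral.integral_div] at hm3
    exact (div_eq_zero_iff.mp hm3).resolve_right ha.ne'
  have hm2' : (∫ y in (0:ℝ)..b, eval ![a, y] v.1 * (2*y - b)) = 0 := by
    simp only [← mul_div_assoc] at hm2
    rw [intervalIntegral.integral_div] at hm2
    exact (div_eq_zero_iff.mp hm2).resolve_right hb.ne'
  have hm4' : (∫ y in (0:ℝ)..b, eval ![(0:ℝ), y] v.1 * (2*y - b)) = 0 := by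
    simp only [← mul_div_assoc] at hm4
    rw [intervalIntegral.integral_div] at hm4
    exact (div_eq_zero_iff.mp hm4).resolve_right hb.ne'
  -- the twelve scalar equations
  have E1 := int_eq (fun x => eval ![x, (0:ℝ)] v.2) q0 q1 (-(3*c1)) (-(4*c5)) 0 a
    (fun x => by simp only [hE2]; ring) hn1
  have E3 := int_eq (fun x => eval ![x, b] v.2) (q0+q2*b-c3*b^2) (q1-2*c2*b)
    (-(3*c1)) (-(4*c5)) 0 a (fun x => by simp only [hE2]; ring) hn3
  have E2 := int_eq (fun y => eval ![a, y] v.1) (p0+p1*a+c2*a^2) (p2+2*c3*a)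
    (3*c4) (4*c6) 0 b (fun y => by simp only [hE1]; ring) hn2
  have E4 := int_eq (fun y => eval ![(0:ℝ), y] v.1) p0 p2 (3*c4) (4*c6) 0 b
    (fun y => by simp only [hE1]; ring) hn4
  have E5 := int_eq (fun x => eval ![x, (0:ℝ)] v.2 * (2*x - a))
    (-(q0*a)) (2*q0-q1*a) (2*q1+3*c1*a) (-(6*c1)+4*c5*a) (-(8*c5)) a
    (fun x => by simp only [hE2]; ring) hm1'
  have E7 := int_eq (fun x => eval ![x, b] v.2 * (2*x - a))
    (-((q0+q2*b-c3*b^2)*a)) (2*(q0+q2*b-c3*b^2)-(q1-2*c2*b)*a)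
    (2*(q1-2*c2*b)+3*c1*a) (-(6*c1)+4*c5*a) (-(8*c5)) a
    (fun x => by simp only [hE2]; ring) hm3'
  have E6 := int_eq (fun y => eval ![a, y] v.1 * (2*y - b))
    (-((p0+p1*a+c2*a^2)*b)) (2*(p0+p1*a+c2*a^2)-(p2+2*c3*a)*b)
    (2*(p2+2*c3*a)-3*c4*b) (2*(3*c4)-4*c6*b) (2*(4*c6)) b
    (fun y => by simp only [hE1]; ring) hm2'
  have E8 := int_eq (fun y => eval ![(0:ℝ), y] v.1 * (2*y - b))
    (-(p0*b)) (2*p0-p2*b) (2*p2-3*c4*b) (2*(3*c4)-4*c6*b) (2*(4*c6)) b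
    (fun y => by simp only [hE1]; ring) hm4'
  have E9 := int_eq (fun x => eval ![x, (0:ℝ)] v.1) p0 p1 c2 0 0 a
    (fun x => by simp only [hE1]; ring) ht1
  have E10 := int_eq (fun x => eval ![x, b] v.1)
    (p0+p2*b+3*c4*b^2+4*c6*b^3) (p1+2*c3*b) c2 0 0 a
    (fun x => by simp only [hE1]; ring) ht3
  have E11 := int_eq (fun y => eval ![a, y] v.2)
    (q0+q1*a-3*c1*a^2-4*c5*a^3) (q2-2*c2*a) (-c3) 0 0 b
    (fun y => by simp only [hE2]; ring) ht2
  have E12 := int_eq (fun y => eval ![(0:ℝ), y] v.2) q0 q2 (-c3) 0 0 b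
    (fun y => by simp only [hE2]; ring) ht4
  have hane := ha.ne'
  have hbne := hb.ne'
  -- elimination
  have hc3 : c3 = 0 := by
    have h : c3 * (a*b^3) = 0 := by linear_combination 3*E6 - 3*E8
    simpa [pow_eq_zero_iff, hane, hbne] using h
  have hc2 : c2 = 0 := by
    have h : c2 * (a^3*b) = 0 := by linear_combination (-3)*E7 + 3*E5
    simpa [pow_eq_zero_iff, hane, hbne] using h
  have hq2 : q2 = 0 := by
    have h : q2 * (a*b) = 0 := by
      linear_combination E3 - E1 + (a*b^2)*hc3 + (a^2*b)*hc2
    simpa [hane, hbne] using h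
  have hp1 : p1 = 0 := by
    have h : p1 * (a*b) = 0 := by
      linear_combination E2 - E4 - (a^2*b)*hc2 - (a*b^2)*hc3
    simpa [hane, hbne] using h
  have R1 : p2*(a*b) + 3*c4*(a*b^2) + 4*c6*(a*b^3) = 0 := by
    linear_combination E10 - E9 - (a^2*b)*hc3
  have hc6 : c6 = 0 := by
    have h : c6 * (a*b^5) = 0 := by linear_combination (5/2)*b^2*R1 - 15*a*E8
    simpa [pow_eq_zero_iff, hane, hbne] using h
  have hp0 : p0 = 0 := by
    have h : p0 * a = 0 := by
      linear_combination E9 - (a^2/2)*hp1 - (a^3/3)*hc2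
    simpa [hane] using h
  have hc4 : c4 = 0 := by
    have h : c4 * (a*b^3) = 0 := by
      linear_combination b*R1 - 2*a*E4 - 2*(a*b^4)*hc6 + 2*(a*b)*hp0
    simpa [pow_eq_zero_iff, hane, hbne] using h
  have hp2 : p2 = 0 := by
    have h : p2 * (a*b) = 0 := by
      linear_combination R1 - 3*(a*b^2)*hc4 - 4*(a*b^3)*hc6
    simpa [hane, hbne] using h
  have R2 : q1*(a*b) - 3*c1*(a^2*b) - 4*c5*(a^3*b) = 0 := by
    linear_combination E11 - E12 + (a*b^2)*hc2
  have hc5 : c5 = 0 := by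
    have h : c5 * (a^5*b) = 0 := by
      linear_combination (-(5/2))*a^2*R2 + 15*b*E5
    simpa [pow_eq_zero_iff, hane, hbne] using h
  have hq0 : q0 = 0 := by
    have h : q0 * b = 0 := by
      linear_combination E12 - (b^2/2)*hq2 + (b^3/3)*hc3
    simpa [hbne] using h
  have hc1 : c1 = 0 := by
    have h : c1 * (a^3*b) = 0 := by
      linear_combination 2*b*E1 - a*R2 - 2*(a*b)*hq0 - 2*(a^4*b)*hc5
    simpa [pow_eq_zero_iff, hane, hbne] using h
  have hq1 : q1 = 0 := by
    have h : q1 * (a*b) = 0 := by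
      linear_combination R2 + 3*(a^2*b)*hc1 + 4*(a^3*b)*hc5
    simpa [hane, hbne] using h
  -- conclude
  have h1 : v.1 = 0 := by
    rw [hv1, hP, hφ, hp0, hp1, hp2, hc1, hc2, hc3, hc4, hc5, hc6]
    simp
  have h2 : v.2 = 0 := by
    rw [hv2, hQ, hφ, hq0, hq1, hq2, hc1, hc2, hc3, hc4, hc5, hc6]
    simp
  exact Prod.ext h1 h2
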